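/- arXiv:2605.10466 — 4 statements merged into one kernel-verified Lean document; each statement's English description precedes it below -/
import Mathlib

section
/- Let u be a nonzero vector in a Euclidean space and e a vector with ‖e‖ ≤ η‖u‖ for some η ∈ [0,1). Then u + e ≠ 0 and cos(u+e, u) := ⟨u+e, u⟩/(‖u+e‖·‖u‖) ≥ √(1−η²). -/
open scoped RealInnerProductSpace

/-- Geometric stability: if `‖e‖ ≤ η‖u‖` with `η ∈ [0,1)` and `u ≠ 0`, then `u + e ≠ 0`
and the cosine of the angle between `u + e` and `u` is at least `√(1 - η²)`. -/
theorem stmt_0 {E : Type*} [NormedAddCommGroup E] [InnerProductSpace ℝ E]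
    (u e : E) (η : ℝ) (hu : u ≠ 0) (hη0 : 0 ≤ η) (hη1 : η < 1)
    (he : ‖e‖ ≤ η * ‖u‖) :
    u + e ≠ 0 ∧ Real.sqrt (1 - η ^ 2) ≤ ⟪u + e, u⟫ / (‖u + e‖ * ‖u‖) := by
  have hA : 0 < ‖u‖ := norm_pos_iff.mpr hu
  have hE : 0 ≤ ‖e‖ := norm_nonneg e
  have hI : |⟪e, u⟫| ≤ ‖e‖ * ‖u‖ := abs_real_inner_le_norm e u
  have hI1 : -(‖e‖ * ‖u‖) ≤ ⟪e, u⟫ := neg_le_of_abs_le hI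
  have hI2 : ⟪e, u⟫ ≤ ‖e‖ * ‖u‖ := le_of_abs_le hI
  have hP : ⟪u + e, u⟫ = ‖u‖ ^ 2 + ⟪e, u⟫ := by
    rw [inner_add_left, real_inner_self_eq_norm_sq]
  have hPpos : 0 < ⟪u + e, u⟫ := by
    rw [hP]
    nlinarith [mul_le_mul_of_nonneg_right he hA.le, mul_pos hA hA, hI1]
  have hne : u + e ≠ 0 := by
    intro h
    rw [h, inner_zero_left] at hPpos
    exact lt_irrefl _ hPpos
  have hN : 0 < ‖u + e‖ := norm_pos_iff.mpr hne
  have hNsq : ‖u + e‖ ^ 2 = ‖u‖ ^ 2 + 2 * ⟪e, u⟫ + ‖e‖ ^ 2 := by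
    rw [← real_inner_self_eq_norm_sq, inner_add_add_self, real_inner_self_eq_norm_sq,
      real_inner_self_eq_norm_sq, real_inner_comm u e]
    ring
  refine ⟨hne, ?_⟩
  have key : (1 - η ^ 2) * (‖u + e‖ * ‖u‖) ^ 2 ≤ ⟪u + e, u⟫ ^ 2 := by
    rw [hP, mul_pow, hNsq]
    have hs : ‖e‖ ^ 2 ≤ η ^ 2 * ‖u‖ ^ 2 := by nlinarith
    nlinarith [sq_nonneg (η ^ 2 * ‖u‖ ^ 2 + ⟪e, u⟫),
      mul_nonneg (mul_nonneg (by nlinarith : (0:ℝ) ≤ 1 - η ^ 2)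
        (by linarith : (0:ℝ) ≤ η ^ 2 * ‖u‖ ^ 2 - ‖e‖ ^ 2)) (sq_nonneg ‖u‖)]
  have h1 : Real.sqrt (1 - η ^ 2) * (‖u + e‖ * ‖u‖) ≤ ⟪u + e, u⟫ := by
    nlinarith [Real.sq_sqrt (by nlinarith : (0:ℝ) ≤ 1 - η ^ 2),
      Real.sqrt_nonneg (1 - η ^ 2), mul_pos hN hA, hPpos]
  rw [le_div_iff₀ (by positivity)]
  exact h1
end

section
/- Let X be an integrable random vector in ℝ^d such that E[exp(pᵀX)] < ∞ for all p in a neighborhood of p₀. Then the cumulant generating function Λ(u) = log E[exp(uᵀX)] is differentiable at p₀ with ∇Λ(p₀) = E[X exp(p₀ᵀX)] / E[exp(p₀ᵀX)]. -/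
open MeasureTheory
open scoped RealInnerProductSpace

open Finset Metric

/-- exponential-moment domination by a finite family of tilted exponentials -/
lemma exp_norm_le_sum' {d : ℕ} (p₀ x : EuclideanSpace ℝ (Fin d)) {r : ℝ} (hr : 0 ≤ r) :
    Real.exp (⟪p₀, x⟫ + r * ‖x‖) ≤
      ∑ t : Finset (Fin d),
        Real.exp ⟪p₀ + (WithLp.equiv 2 _).symm (fun i => if i ∈ t then r else -r), x⟫ := by
  have h1 : ‖x‖ ≤ ∑ i, |x i| := by
    rw [EuclideanSpace.norm_eq]
    have h2 : ∑ i, ‖x i‖ ^ 2 ≤ (∑ i, ‖x i‖) ^ 2 :=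
      Finset.sum_sq_le_sq_sum_of_nonneg fun i _ => norm_nonneg _
    calc Real.sqrt (∑ i, ‖x i‖ ^ 2) ≤ Real.sqrt ((∑ i, ‖x i‖) ^ 2) := Real.sqrt_le_sqrt h2
      _ = ∑ i, ‖x i‖ := Real.sqrt_sq (by positivity)
      _ = ∑ i, |x i| := by simp [Real.norm_eq_abs]
  calc Real.exp (⟪p₀, x⟫ + r * ‖x‖)
      ≤ Real.exp (⟪p₀, x⟫ + r * ∑ i, |x i|) := by
        apply Real.exp_le_exp.2; gcongr
    _ = Real.exp ⟪p₀, x⟫ * ∏ i, Real.exp (r * |x i|) := by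
        rw [Real.exp_add, ← Real.exp_sum, Finset.mul_sum]
    _ ≤ Real.exp ⟪p₀, x⟫ * ∏ i, (Real.exp (r * x i) + Real.exp (-(r * x i))) := by
        gcongr with i hi
        rcases abs_choice (x i) with h | h <;> rw [h]
        · exact le_add_of_nonneg_right (Real.exp_pos _).le
        · rw [mul_neg]; exact le_add_of_nonneg_left (Real.exp_pos _).le
    _ = ∑ t : Finset (Fin d),
        Real.exp ⟪p₀ + (WithLp.equiv 2 _).symm (fun i => if i ∈ t then r else -r), x⟫ := by
        rw [Finset.prod_add, Finset.mul_sum, ← Finset.powerset_univ, Finset.sum_congr rfl]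
        intro t _
        rw [← Real.exp_sum, ← Real.exp_sum, ← Real.exp_add, ← Real.exp_add]
        congr 1
        have hsplit : ∀ i, i ∈ t → ((if i ∈ t then r else -r) * x i) = r * x i := by
          intro i hi; rw [if_pos hi]
        have hsplit2 : ∀ i ∈ univ \ t, ((if i ∈ t then r else -r) * x i) = -(r * x i) := by
          intro i hi; rw [if_neg (by simpa using (Finset.mem_sdiff.1 hi).2), neg_mul]
        have e1 : ∑ i ∈ t, (r * x i) = ∑ i ∈ t, (if i ∈ t then r else -r) * x i :=
          Finset.sum_congr rfl fun i hi => ((hsplit i hi).symm)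
        have e2 : ∑ i ∈ univ \ t, (-(r * x i))
            = ∑ i ∈ univ \ t, (if i ∈ t then r else -r) * x i :=
          Finset.sum_congr rfl fun i hi => ((hsplit2 i hi).symm)
        have key : ∑ i ∈ t, (r * x i) + ∑ i ∈ univ \ t, (-(r * x i))
            = ∑ i, (if i ∈ t then r else -r) * x i := by
          rw [e1, e2, add_comm, Finset.sum_sdiff (Finset.subset_univ t)]
        rw [key, inner_add_left]
        congr 1
        rw [PiLp.inner_apply]
        refine Finset.sum_congr rfl fun i _ => ?_
        simp [mul_comm]

set_option maxHeartbeats 1000000 in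
set_option synthInstance.maxHeartbeats 400000 in
/-- Differentiability of the cumulant generating function: if `E[exp⟪p, X⟫]` is finite for
all `p` in a neighborhood of `p₀` and `X` is integrable, then
`Λ(u) = log E[exp⟪u, X⟫]` has gradient `E[X exp⟪p₀,X⟫] / E[exp⟪p₀,X⟫]` at `p₀`. -/
theorem stmt_2 {d : ℕ} {Ω : Type*} [MeasurableSpace Ω]
    (μ : Measure Ω) [IsProbabilityMeasure μ]
    (X : Ω → EuclideanSpace ℝ (Fin d)) (hX : Integrable X μ)
    (p₀ : EuclideanSpace ℝ (Fin d))
    (hmom : ∃ ε > 0, ∀ p : EuclideanSpace ℝ (Fin d), ‖p - p₀‖ < ε →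
      Integrable (fun ω => Real.exp ⟪p, X ω⟫) μ) :
    HasGradientAt (fun u : EuclideanSpace ℝ (Fin d) =>
        Real.log (∫ ω, Real.exp ⟪u, X ω⟫ ∂μ))
      ((∫ ω, Real.exp ⟪p₀, X ω⟫ ∂μ)⁻¹ • ∫ ω, Real.exp ⟪p₀, X ω⟫ • X ω ∂μ) p₀ := by
  obtain ⟨ε, hε, hint⟩ := hmom
  have hXm := hX.1
  set δ : ℝ := ε / (2 * (Real.sqrt d + 1)) with hδdef
  have hsq : (0:ℝ) ≤ Real.sqrt d := Real.sqrt_nonneg _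
  have hδ : 0 < δ := by positivity
  set r : ℝ := 2 * δ with hrdef
  have hr : 0 ≤ r := by positivity
  set q : Finset (Fin d) → EuclideanSpace ℝ (Fin d) :=
    fun t => (WithLp.equiv 2 _).symm (fun i => if i ∈ t then r else -r) with hqdef
  have hqnorm : ∀ t, ‖q t‖ < ε := by
    intro t
    have hsqs : ∀ i : Fin d, ‖q t i‖ ^ 2 = r ^ 2 := by
      intro i
      by_cases h : i ∈ t <;> simp [hqdef, h, Real.norm_eq_abs, sq_abs]
    have h1 : ‖q t‖ = Real.sqrt d * r := by
      rw [EuclideanSpace.norm_eq, Finset.sum_congr rfl fun i _ => hsqs i, Finset.sum_const,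
        card_univ, Fintype.card_fin, nsmul_eq_mul, Real.sqrt_mul (Nat.cast_nonneg d),
        Real.sqrt_sq hr]
    rw [h1]
    have h2 : Real.sqrt d * r = ε * (Real.sqrt d / (Real.sqrt d + 1)) := by
      rw [hrdef, hδdef]; field_simp
    rw [h2]
    calc ε * (Real.sqrt d / (Real.sqrt d + 1)) < ε * 1 := by
          apply mul_lt_mul_of_pos_left _ hε
          rw [div_lt_one (by linarith)]; linarith
      _ = ε := mul_one ε
  have hGint : Integrable (fun ω => ∑ t : Finset (Fin d), Real.exp ⟪p₀ + q t, X ω⟫) μ := by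
    apply integrable_finset_sum
    intro t _
    exact hint (p₀ + q t) (by simpa using hqnorm t)
  have hmeasI : ∀ p : EuclideanSpace ℝ (Fin d),
      AEStronglyMeasurable (fun ω => Real.exp ⟪p, X ω⟫) μ := fun p =>
    Real.continuous_exp.comp_aestronglyMeasurable (aestronglyMeasurable_const.inner hXm)
  have hkey : ∀ u : EuclideanSpace ℝ (Fin d), u ∈ ball p₀ δ → ∀ ω,
      Real.exp ⟪u, X ω⟫ * ‖X ω‖ ≤
        δ⁻¹ * ∑ t : Finset (Fin d), Real.exp ⟪p₀ + q t, X ω⟫ := by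
    intro u hu ω
    have h2 : ⟪u, X ω⟫ ≤ ⟪p₀, X ω⟫ + δ * ‖X ω‖ := by
      have e1 : ⟪u, X ω⟫ - ⟪p₀, X ω⟫ = ⟪u - p₀, X ω⟫ := by rw [inner_sub_left]
      have h3 : ⟪u - p₀, X ω⟫ ≤ ‖u - p₀‖ * ‖X ω‖ := real_inner_le_norm _ _
      have h4 : ‖u - p₀‖ * ‖X ω‖ ≤ δ * ‖X ω‖ :=
        mul_le_mul_of_nonneg_right (le_of_lt (by simpa [dist_eq_norm] using hu))
          (norm_nonneg _)
      linarith
    have h5 : ‖X ω‖ ≤ δ⁻¹ * Real.exp (δ * ‖X ω‖) := by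
      have h6 : δ * ‖X ω‖ ≤ Real.exp (δ * ‖X ω‖) := by
        have := Real.add_one_le_exp (δ * ‖X ω‖); linarith
      rw [← mul_le_mul_iff_right₀ hδ, ← mul_assoc, mul_inv_cancel₀ hδ.ne', one_mul]
      exact h6
    calc Real.exp ⟪u, X ω⟫ * ‖X ω‖
        ≤ Real.exp (⟪p₀, X ω⟫ + δ * ‖X ω‖) * (δ⁻¹ * Real.exp (δ * ‖X ω‖)) :=
          mul_le_mul (Real.exp_le_exp.2 h2) h5 (norm_nonneg _) (Real.exp_pos _).le
      _ = δ⁻¹ * Real.exp (⟪p₀, X ω⟫ + r * ‖X ω‖) := by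
          have : Real.exp (⟪p₀, X ω⟫ + δ * ‖X ω‖) * (δ⁻¹ * Real.exp (δ * ‖X ω‖))
              = δ⁻¹ * (Real.exp (⟪p₀, X ω⟫ + δ * ‖X ω‖) * Real.exp (δ * ‖X ω‖)) := by ring
          rw [this, ← Real.exp_add]
          congr 2
          rw [hrdef]; ring
      _ ≤ δ⁻¹ * ∑ t : Finset (Fin d), Real.exp ⟪p₀ + q t, X ω⟫ :=
          mul_le_mul_of_nonneg_left (exp_norm_le_sum' p₀ (X ω) hr) (inv_nonneg.2 hδ.le)
  have hfd : HasFDerivAt (fun u : EuclideanSpace ℝ (Fin d) => ∫ ω, Real.exp ⟪u, X ω⟫ ∂μ)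
      (∫ ω, Real.exp ⟪p₀, X ω⟫ • (innerSL ℝ (X ω)) ∂μ) p₀ := by
    apply hasFDerivAt_integral_of_dominated_of_fderiv_le (𝕜 := ℝ) (μ := μ)
      (bound := fun ω => δ⁻¹ * ∑ t : Finset (Fin d), Real.exp ⟪p₀ + q t, X ω⟫)
      (F' := fun u ω => Real.exp ⟪u, X ω⟫ • (innerSL ℝ (X ω))) (ball_mem_nhds p₀ hδ)
    · exact Filter.Eventually.of_forall fun u => hmeasI u
    · exact hint p₀ (by simpa using hε)
    · exact (hmeasI p₀).smul ((innerSL ℝ).continuous.comp_aestronglyMeasurable hXm)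
    · refine Filter.Eventually.of_forall fun ω u hu => ?_
      have hn : ‖Real.exp ⟪u, X ω⟫ • (innerSL ℝ (X ω))‖ = Real.exp ⟪u, X ω⟫ * ‖X ω‖ := by
        rw [norm_smul (Real.exp ⟪u, X ω⟫) (innerSL ℝ (X ω)), Real.norm_eq_abs,
          abs_of_pos (Real.exp_pos _), innerSL_apply_norm]
      rw [hn]
      exact hkey u hu ω
    · exact hGint.const_mul _
    · refine Filter.Eventually.of_forall fun ω u _ => ?_
      have h0 : (fun v : EuclideanSpace ℝ (Fin d) => Real.exp ⟪v, X ω⟫)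
          = fun v => Real.exp (innerSL ℝ (X ω) v) := by
        funext v; rw [real_inner_comm]; rfl
      have h1 : Real.exp ⟪u, X ω⟫ = Real.exp (innerSL ℝ (X ω) u) := by
        rw [real_inner_comm]; rfl
      rw [h0, h1]
      exact ((innerSL ℝ (X ω)).hasFDerivAt (x := u)).exp
  have hintsmul : Integrable (fun ω => Real.exp ⟪p₀, X ω⟫ • X ω) μ := by
    apply Integrable.mono' (hGint.const_mul δ⁻¹) ((hmeasI p₀).smul hXm)
    refine Filter.Eventually.of_forall fun ω => ?_
    rw [Pi.smul_apply', norm_smul, Real.norm_eq_abs, abs_of_pos (Real.exp_pos _)]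
    exact hkey p₀ (mem_ball_self hδ) ω
  have hswap : (∫ ω, Real.exp ⟪p₀, X ω⟫ • (innerSL ℝ (X ω)) ∂μ)
      = innerSL ℝ (∫ ω, Real.exp ⟪p₀, X ω⟫ • X ω ∂μ) := by
    rw [← ContinuousLinearMap.integral_comp_comm (innerSL ℝ) hintsmul]
    congr 1
    funext ω
    exact ((innerSL ℝ).map_smul _ _).symm
  rw [hswap] at hfd
  have hpos : 0 < ∫ ω, Real.exp ⟪p₀, X ω⟫ ∂μ :=
    integral_exp_pos (hint p₀ (by simpa using hε))
  have hlog := hfd.log hpos.ne'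
  refine hasGradientAt_iff_hasFDerivAt.mpr ?_
  have heq : (InnerProductSpace.toDual ℝ (EuclideanSpace ℝ (Fin d)))
      ((∫ ω, Real.exp ⟪p₀, X ω⟫ ∂μ)⁻¹ • ∫ ω, Real.exp ⟪p₀, X ω⟫ • X ω ∂μ)
      = (∫ ω, Real.exp ⟪p₀, X ω⟫ ∂μ)⁻¹ • innerSL ℝ (∫ ω, Real.exp ⟪p₀, X ω⟫ • X ω ∂μ) := by
    ext v
    simp [real_inner_smul_left]
  exact heq ▸ hlog
end

section
/- Let X be a rotationally invariant random vector on ℝ^d with X ≠ 0 almost surely and moment conditions E[exp(pᵀX)] < ∞, E[‖X‖ exp(pᵀX)] < ∞. Then for every p ≠ 0, the tilted mean T(p) = E[X exp(pᵀX)]/E[exp(pᵀX)] satisfies T(p) = γ·p for some γ > 0. -/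
open MeasureTheory
open scoped RealInnerProductSpace

section helpers
variable {d : ℕ} {Ω : Type*} [MeasurableSpace Ω] (μ : Measure Ω)
  (X : Ω → EuclideanSpace ℝ (Fin d))

lemma aux_transfer (hXm : AEMeasurable X μ)
    (hrot : ∀ R : EuclideanSpace ℝ (Fin d) ≃ₗᵢ[ℝ] EuclideanSpace ℝ (Fin d),
      Measure.map (fun ω => R (X ω)) μ = Measure.map X μ)
    {F : Type*} [NormedAddCommGroup F] [NormedSpace ℝ F]
    (R : EuclideanSpace ℝ (Fin d) ≃ₗᵢ[ℝ] EuclideanSpace ℝ (Fin d))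
    (f : EuclideanSpace ℝ (Fin d) → F) (hf : Continuous f) :
    ∫ ω, f (R (X ω)) ∂μ = ∫ ω, f (X ω) ∂μ := by
  have hRX : AEMeasurable (fun ω => R (X ω)) μ :=
    R.continuous.measurable.comp_aemeasurable hXm
  calc ∫ ω, f (R (X ω)) ∂μ
      = ∫ x, f x ∂(Measure.map (fun ω => R (X ω)) μ) :=
        (integral_map hRX hf.aestronglyMeasurable).symm
    _ = ∫ x, f x ∂(Measure.map X μ) := by rw [hrot R]
    _ = ∫ ω, f (X ω) ∂μ := integral_map hXm hf.aestronglyMeasurable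

lemma aux_transfer_int (hXm : AEMeasurable X μ)
    (hrot : ∀ R : EuclideanSpace ℝ (Fin d) ≃ₗᵢ[ℝ] EuclideanSpace ℝ (Fin d),
      Measure.map (fun ω => R (X ω)) μ = Measure.map X μ)
    {F : Type*} [NormedAddCommGroup F]
    (R : EuclideanSpace ℝ (Fin d) ≃ₗᵢ[ℝ] EuclideanSpace ℝ (Fin d))
    (f : EuclideanSpace ℝ (Fin d) → F) (hf : Continuous f)
    (hi : Integrable (fun ω => f (X ω)) μ) :
    Integrable (fun ω => f (R (X ω))) μ := by
  have hRX : AEMeasurable (fun ω => R (X ω)) μ :=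
    R.continuous.measurable.comp_aemeasurable hXm
  have h1 : Integrable f (Measure.map X μ) :=
    (integrable_map_measure hf.aestronglyMeasurable hXm).mpr hi
  rw [← hrot R] at h1
  exact (integrable_map_measure hf.aestronglyMeasurable hRX).mp h1

end helpers

lemma aux_knonneg (t : ℝ) : 0 ≤ t * (Real.exp t - Real.exp (-t)) := by
  rcases le_total 0 t with ht | ht
  · have := Real.exp_le_exp.mpr (by linarith : -t ≤ t)
    nlinarith
  · have := Real.exp_le_exp.mpr (by linarith : t ≤ -t)
    nlinarith

lemma aux_kpos {t : ℝ} (ht : t ≠ 0) : 0 < t * (Real.exp t - Real.exp (-t)) := by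
  rcases lt_or_gt_of_ne ht with h | h
  · have := Real.exp_lt_exp.mpr (by linarith : t < -t)
    nlinarith
  · have := Real.exp_lt_exp.mpr (by linarith : -t < t)
    nlinarith


/-- Rotational-invariance alignment: for a rotationally invariant random vector `X`
with `X ≠ 0` a.s. and the relevant exponential moments, the tilted mean
`T(p) = E[X exp⟪p,X⟫]/E[exp⟪p,X⟫]` satisfies `T(p) = γ • p` for some `γ > 0`,
for every `p ≠ 0`. -/
theorem stmt_7 {d : ℕ} {Ω : Type*} [MeasurableSpace Ω]
    (μ : Measure Ω) [IsProbabilityMeasure μ]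
    (X : Ω → EuclideanSpace ℝ (Fin d)) (hXm : AEMeasurable X μ)
    (hrot : ∀ R : EuclideanSpace ℝ (Fin d) ≃ₗᵢ[ℝ] EuclideanSpace ℝ (Fin d),
      Measure.map (fun ω => R (X ω)) μ = Measure.map X μ)
    (hne : ∀ᵐ ω ∂μ, X ω ≠ 0)
    (p : EuclideanSpace ℝ (Fin d)) (hp : p ≠ 0)
    (hint1 : Integrable (fun ω => Real.exp ⟪p, X ω⟫) μ)
    (hint2 : Integrable (fun ω => ‖X ω‖ * Real.exp ⟪p, X ω⟫) μ) :
    ∃ γ : ℝ, 0 < γ ∧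
      (∫ ω, Real.exp ⟪p, X ω⟫ ∂μ)⁻¹ • (∫ ω, Real.exp ⟪p, X ω⟫ • X ω ∂μ) = γ • p := by
  have hip : Continuous fun x : EuclideanSpace ℝ (Fin d) => ⟪p, x⟫ :=
    continuous_const.inner continuous_id
  have hgc : Continuous fun x : EuclideanSpace ℝ (Fin d) => Real.exp ⟪p, x⟫ • x :=
    (Real.continuous_exp.comp hip).smul continuous_id
  have hhc : Continuous fun x : EuclideanSpace ℝ (Fin d) =>
      ⟪p, x⟫ * Real.exp ⟪p, x⟫ := hip.mul (Real.continuous_exp.comp hip)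
  have hgint : Integrable (fun ω => Real.exp ⟪p, X ω⟫ • X ω) μ := by
    refine hint2.mono' (hgc.comp_aestronglyMeasurable hXm.aestronglyMeasurable) ?_
    filter_upwards with ω
    rw [norm_smul, Real.norm_eq_abs, Real.abs_exp, mul_comm]
  have hhint : Integrable (fun ω => ⟪p, X ω⟫ * Real.exp ⟪p, X ω⟫) μ := by
    refine (hint2.const_mul ‖p‖).mono'
      (hhc.comp_aestronglyMeasurable hXm.aestronglyMeasurable) ?_
    filter_upwards with ω
    rw [Real.norm_eq_abs, abs_mul, Real.abs_exp]
    have h1 : |⟪p, X ω⟫| ≤ ‖p‖ * ‖X ω‖ := abs_real_inner_le_norm _ _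
    nlinarith [Real.exp_pos ⟪p, X ω⟫,
      mul_le_mul_of_nonneg_right h1 (Real.exp_pos ⟪p, X ω⟫).le]
  set Z := ∫ ω, Real.exp ⟪p, X ω⟫ ∂μ with hZ
  set M := ∫ ω, Real.exp ⟪p, X ω⟫ • X ω ∂μ with hM
  have hZpos : 0 < Z := integral_exp_pos hint1
  -- Step 1: M is fixed by any rotation fixing p, hence lies on the line through p
  have hfix : ∀ R : EuclideanSpace ℝ (Fin d) ≃ₗᵢ[ℝ] EuclideanSpace ℝ (Fin d),
      R p = p → R M = M := by
    intro R hRp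
    have h1 : ∀ x : EuclideanSpace ℝ (Fin d),
        Real.exp ⟪p, R x⟫ • R x = R (Real.exp ⟪p, x⟫ • x) := by
      intro x
      have h2 : ⟪p, R x⟫ = ⟪p, x⟫ := by
        conv_lhs => rw [← hRp]
        exact R.inner_map_map p x
      rw [h2, R.map_smul]
    calc R M = ∫ ω, R (Real.exp ⟪p, X ω⟫ • X ω) ∂μ :=
          (R.toLinearIsometry.integral_comp_comm _).symm
      _ = ∫ ω, Real.exp ⟪p, R (X ω)⟫ • R (X ω) ∂μ := by simp_rw [h1]
      _ = M := aux_transfer μ X hXm hrot R _ hgc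
  have hMspan : M ∈ (ℝ ∙ p) := by
    have h := hfix (Submodule.reflection (ℝ ∙ p))
      (Submodule.reflection_mem_subspace_eq_self (Submodule.mem_span_singleton_self p))
    exact (Submodule.reflection_eq_self_iff M).mp h
  obtain ⟨c, hc⟩ := Submodule.mem_span_singleton.mp hMspan
  -- Step 2: ⟪p, M⟫ > 0
  have hinner : ⟪p, M⟫ = ∫ ω, ⟪p, X ω⟫ * Real.exp ⟪p, X ω⟫ ∂μ := by
    rw [hM, ← integral_inner hgint p]
    congr 1; funext ω
    rw [real_inner_smul_right]; ring
  have hneg : ∫ ω, -⟪p, X ω⟫ * Real.exp (-⟪p, X ω⟫) ∂μ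
      = ∫ ω, ⟪p, X ω⟫ * Real.exp ⟪p, X ω⟫ ∂μ := by
    have h := aux_transfer μ X hXm hrot (LinearIsometryEquiv.neg ℝ)
      (fun x => ⟪p, x⟫ * Real.exp ⟪p, x⟫) hhc
    simpa [inner_neg_right] using h
  have hhint' : Integrable (fun ω => -⟪p, X ω⟫ * Real.exp (-⟪p, X ω⟫)) μ := by
    have h := aux_transfer_int μ X hXm hrot (LinearIsometryEquiv.neg ℝ)
      (fun x => ⟪p, x⟫ * Real.exp ⟪p, x⟫) hhc hhint
    simpa [inner_neg_right] using h
  have h2I : ∫ ω, ⟪p, X ω⟫ * (Real.exp ⟪p, X ω⟫ - Real.exp (-⟪p, X ω⟫)) ∂μ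
      = 2 * ⟪p, M⟫ := by
    have heq : (fun ω => ⟪p, X ω⟫ * (Real.exp ⟪p, X ω⟫ - Real.exp (-⟪p, X ω⟫)))
        = fun ω => ⟪p, X ω⟫ * Real.exp ⟪p, X ω⟫
          + -⟪p, X ω⟫ * Real.exp (-⟪p, X ω⟫) := by
      funext ω; ring
    rw [heq, integral_add hhint hhint', hneg, hinner]; ring
  -- the key positivity: ⟪p,X⟫ is not a.s. zero
  have hSne : μ {ω | ⟪p, X ω⟫ ≠ 0} ≠ 0 := by
    intro hzero
    have hz : ∀ᵐ ω ∂μ, ⟪p, X ω⟫ = 0 := by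
      rw [ae_iff]; exact hzero
    have hS : MeasurableSet {x : EuclideanSpace ℝ (Fin d) | ⟪p, x⟫ ≠ 0} :=
      hip.measurable (measurableSet_singleton (0 : ℝ)).compl
    have hbasis : ∀ i : Fin d, ∀ᵐ ω ∂μ,
        ⟪(EuclideanSpace.single i 1 : EuclideanSpace ℝ (Fin d)), X ω⟫ = 0 := by
      intro i
      set q : EuclideanSpace ℝ (Fin d) := ‖p‖ • EuclideanSpace.single i 1 with hq
      have hnq : ‖q‖ = ‖p‖ := by
        rw [hq, norm_smul, EuclideanSpace.norm_single, norm_one, mul_one, norm_norm]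
      set R := Submodule.reflection (ℝ ∙ (q - p))ᗮ with hR
      have hRq : R q = p := Submodule.reflection_sub hnq
      have key : ∀ x, ⟪q, x⟫ = ⟪p, R x⟫ := by
        intro x
        conv_rhs => rw [← hRq]
        exact (R.inner_map_map q x).symm
      have hRX : AEMeasurable (fun ω => R (X ω)) μ :=
        R.continuous.measurable.comp_aemeasurable hXm
      have h1 : μ ((fun ω => R (X ω)) ⁻¹' {x | ⟪p, x⟫ ≠ 0})
          = μ (X ⁻¹' {x | ⟪p, x⟫ ≠ 0}) := by
        rw [← Measure.map_apply_of_aemeasurable hRX hS,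
          ← Measure.map_apply_of_aemeasurable hXm hS, hrot R]
      have h2 : μ (X ⁻¹' {x | ⟪p, x⟫ ≠ 0}) = 0 := hzero
      have h3 : μ {ω | ⟪q, X ω⟫ ≠ 0} = 0 := by
        have hset : {ω | ⟪q, X ω⟫ ≠ 0}
            = (fun ω => R (X ω)) ⁻¹' {x | ⟪p, x⟫ ≠ 0} := by
          ext ω; simp only [Set.mem_setOf_eq, Set.mem_preimage, key]
        rw [hset, h1, h2]
      have h4 : ∀ᵐ ω ∂μ, ⟪q, X ω⟫ = 0 := by
        rw [ae_iff]; exact h3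
      filter_upwards [h4] with ω h5
      rw [hq, real_inner_smul_left] at h5
      have hpn : ‖p‖ ≠ 0 := norm_ne_zero_iff.mpr hp
      exact (mul_eq_zero.mp h5).resolve_left hpn
    have hall : ∀ᵐ ω ∂μ, ∀ i : Fin d,
        ⟪(EuclideanSpace.single i 1 : EuclideanSpace ℝ (Fin d)), X ω⟫ = 0 :=
      ae_all_iff.mpr hbasis
    have hzero' : ∀ᵐ ω ∂μ, X ω = 0 := by
      filter_upwards [hall] with ω h
      ext i
      simpa [EuclideanSpace.inner_single_left] using h i
    obtain ⟨ω, h1, h2⟩ := (hne.and hzero').exists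
    exact h1 h2
  have hkint : Integrable
      (fun ω => ⟪p, X ω⟫ * (Real.exp ⟪p, X ω⟫ - Real.exp (-⟪p, X ω⟫))) μ := by
    have heq : (fun ω => ⟪p, X ω⟫ * (Real.exp ⟪p, X ω⟫ - Real.exp (-⟪p, X ω⟫)))
        = fun ω => ⟪p, X ω⟫ * Real.exp ⟪p, X ω⟫
          + -⟪p, X ω⟫ * Real.exp (-⟪p, X ω⟫) := by
      funext ω; ring
    rw [heq]; exact hhint.add hhint'
  have hpos : 0 < ∫ ω, ⟪p, X ω⟫ * (Real.exp ⟪p, X ω⟫ - Real.exp (-⟪p, X ω⟫)) ∂μ := by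
    rw [integral_pos_iff_support_of_nonneg (fun ω => aux_knonneg _) hkint]
    have hsupp : Function.support
        (fun ω => ⟪p, X ω⟫ * (Real.exp ⟪p, X ω⟫ - Real.exp (-⟪p, X ω⟫)))
        = {ω | ⟪p, X ω⟫ ≠ 0} := by
      ext ω
      simp only [Function.mem_support, Set.mem_setOf_eq]
      constructor
      · intro h ht; rw [ht] at h; simp at h
      · intro ht; exact (aux_kpos ht).ne'
    rw [hsupp]
    exact pos_iff_ne_zero.mpr hSne
  have hpM : 0 < ⟪p, M⟫ := by linarith [h2I ▸ hpos]
  -- conclude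
  have hcpos : 0 < c := by
    have : ⟪p, M⟫ = c * (‖p‖ * ‖p‖) := by
      rw [← hc, real_inner_smul_right, real_inner_self_eq_norm_mul_norm]
    have hpn : 0 < ‖p‖ := norm_pos_iff.mpr hp
    nlinarith
  refine ⟨Z⁻¹ * c, by positivity, ?_⟩
  rw [← hc, smul_smul]
end

section
/- Let Z be a rotationally invariant random vector on ℝ^d with appropriate exponential moments, B ∈ ℝ^{d×d} invertible, and X := BZ with Σ := BBᵀ. Then for every p ≠ 0 with Bᵀp ≠ 0, the tilted mean m(p) := E[X exp(pᵀX)]/E[exp(pᵀX)] equals γ·Σp for some scalar γ > 0 depending on B only through ‖Bᵀp‖² = pᵀΣp. -/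
open MeasureTheory
open scoped RealInnerProductSpace

namespace Stmt8Aux

variable {d : ℕ} {Ω : Type*} [MeasurableSpace Ω]

noncomputable def Nf (μ : Measure Ω) (Z : Ω → EuclideanSpace ℝ (Fin d))
    (w : EuclideanSpace ℝ (Fin d)) : ℝ := ∫ ω, Real.exp ⟪w, Z ω⟫ ∂μ

noncomputable def Vf (μ : Measure Ω) (Z : Ω → EuclideanSpace ℝ (Fin d))
    (w : EuclideanSpace ℝ (Fin d)) : EuclideanSpace ℝ (Fin d) :=
  ∫ ω, Real.exp ⟪w, Z ω⟫ • Z ω ∂μ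

noncomputable def gam (μ : Measure Ω) (Z : Ω → EuclideanSpace ℝ (Fin d))
    (w : EuclideanSpace ℝ (Fin d)) : ℝ :=
  ⟪w, Vf μ Z w⟫ / (‖w‖ ^ 2 * Nf μ Z w)

variable {μ : Measure Ω} {Z : Ω → EuclideanSpace ℝ (Fin d)}

lemma cont_exp (w : EuclideanSpace ℝ (Fin d)) :
    Continuous fun z : EuclideanSpace ℝ (Fin d) => Real.exp ⟪w, z⟫ :=
  Real.continuous_exp.comp (continuous_const.inner continuous_id)

section Hyps

variable (hZm : AEMeasurable Z μ)
  (hrot : ∀ R : EuclideanSpace ℝ (Fin d) ≃ₗᵢ[ℝ] EuclideanSpace ℝ (Fin d),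
    Measure.map (fun ω => R (Z ω)) μ = Measure.map Z μ)
  (hmom : ∀ u : EuclideanSpace ℝ (Fin d),
    Integrable (fun ω => Real.exp ⟪u, Z ω⟫) μ ∧
    Integrable (fun ω => ‖Z ω‖ * Real.exp ⟪u, Z ω⟫) μ)

include hZm hmom in
lemma int_smul (w : EuclideanSpace ℝ (Fin d)) :
    Integrable (fun ω => Real.exp ⟪w, Z ω⟫ • Z ω) μ := by
  refine (hmom w).2.mono' ?_ ?_
  · exact (((cont_exp w).comp_aestronglyMeasurable hZm.aestronglyMeasurable).smul
      hZm.aestronglyMeasurable)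
  · filter_upwards with ω
    rw [norm_smul, Real.norm_eq_abs, abs_of_pos (Real.exp_pos _), mul_comm]

include hZm hmom in
lemma int_mul (w : EuclideanSpace ℝ (Fin d)) :
    Integrable (fun ω => Real.exp ⟪w, Z ω⟫ * ⟪w, Z ω⟫) μ := by
  refine ((hmom w).2.const_mul ‖w‖).mono' ?_ ?_
  · exact (((cont_exp w).mul (continuous_const.inner continuous_id)).comp_aestronglyMeasurable
      hZm.aestronglyMeasurable)
  · filter_upwards with ω
    rw [Real.norm_eq_abs, abs_mul, abs_of_pos (Real.exp_pos _)]
    calc Real.exp ⟪w, Z ω⟫ * |⟪w, Z ω⟫| ≤ Real.exp ⟪w, Z ω⟫ * (‖w‖ * ‖Z ω‖) := by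
          exact mul_le_mul_of_nonneg_left (abs_real_inner_le_norm _ _) (Real.exp_pos _).le
      _ = ‖w‖ * (‖Z ω‖ * Real.exp ⟪w, Z ω⟫) := by ring

include hmom in
lemma N_pos [IsProbabilityMeasure μ] (w : EuclideanSpace ℝ (Fin d)) : 0 < Nf μ Z w := by
  rw [Nf, integral_pos_iff_support_of_nonneg_ae
    (Filter.Eventually.of_forall fun ω => (Real.exp_pos _).le) (hmom w).1]
  have h : (Function.support fun ω => Real.exp ⟪w, Z ω⟫) = Set.univ := by
    ext ω; simp [Function.support, Real.exp_ne_zero]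
  rw [h]
  simp

include hZm hrot in
lemma N_inv (R : EuclideanSpace ℝ (Fin d) ≃ₗᵢ[ℝ] EuclideanSpace ℝ (Fin d))
    (w : EuclideanSpace ℝ (Fin d)) : Nf μ Z (R w) = Nf μ Z w := by
  have hRZ : AEMeasurable (fun ω => R (Z ω)) μ :=
    R.continuous.measurable.comp_aemeasurable hZm
  have h : ∫ ω, Real.exp ⟪R w, R (Z ω)⟫ ∂μ = ∫ ω, Real.exp ⟪R w, Z ω⟫ ∂μ := by
    rw [← integral_map hRZ (cont_exp (R w)).aestronglyMeasurable, hrot R,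
      integral_map hZm (cont_exp (R w)).aestronglyMeasurable]
  rw [Nf, ← h]
  simp_rw [LinearIsometryEquiv.inner_map_map]
  rfl

include hZm hrot hmom in
lemma V_equiv (R : EuclideanSpace ℝ (Fin d) ≃ₗᵢ[ℝ] EuclideanSpace ℝ (Fin d))
    (w : EuclideanSpace ℝ (Fin d)) : Vf μ Z (R w) = R (Vf μ Z w) := by
  have hRZ : AEMeasurable (fun ω => R (Z ω)) μ :=
    R.continuous.measurable.comp_aemeasurable hZm
  have hcont : Continuous fun z : EuclideanSpace ℝ (Fin d) => Real.exp ⟪R w, z⟫ • z :=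
    (cont_exp (R w)).smul continuous_id
  have h1 : ∫ ω, Real.exp ⟪R w, R (Z ω)⟫ • R (Z ω) ∂μ
      = ∫ ω, Real.exp ⟪R w, Z ω⟫ • Z ω ∂μ := by
    rw [← integral_map hRZ hcont.aestronglyMeasurable, hrot R,
      integral_map hZm hcont.aestronglyMeasurable]
  have h2 : (∫ ω, Real.exp ⟪R w, R (Z ω)⟫ • R (Z ω) ∂μ) = R (Vf μ Z w) := by
    simp_rw [LinearIsometryEquiv.inner_map_map]
    have h3 : ∀ ω, Real.exp ⟪w, Z ω⟫ • R (Z ω)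
        = R.toLinearIsometry.toContinuousLinearMap (Real.exp ⟪w, Z ω⟫ • Z ω) := by
      intro ω; simp
    simp_rw [h3]
    rw [ContinuousLinearMap.integral_comp_comm _ (int_smul hZm hmom w)]
    rfl
  rw [Vf, ← h1, h2]

include hZm hrot hmom in
lemma not_ae_inner_zero [IsProbabilityMeasure μ] (hne : ∀ᵐ ω ∂μ, Z ω ≠ 0)
    (w : EuclideanSpace ℝ (Fin d)) (hw : w ≠ 0)
    (h : ∀ᵐ ω ∂μ, ⟪w, Z ω⟫ = 0) : False := by
  have hZnorm : Integrable (fun ω => ‖Z ω‖) μ := by simpa using (hmom 0).2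
  have hw0 : ‖w‖ ≠ 0 := norm_ne_zero_iff.2 hw
  have key : ∀ i : Fin d, ∀ᵐ ω ∂μ, Z ω i = 0 := by
    intro i
    set wi : EuclideanSpace ℝ (Fin d) := ‖w‖ • EuclideanSpace.single i (1:ℝ) with hwi
    have hnorm : ‖w‖ = ‖wi‖ := by
      rw [hwi, norm_smul, EuclideanSpace.norm_single]
      simp [abs_of_nonneg (norm_nonneg w)]
    obtain ⟨R, hR⟩ : ∃ R : EuclideanSpace ℝ (Fin d) ≃ₗᵢ[ℝ] EuclideanSpace ℝ (Fin d), R w = wi :=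
      ⟨Submodule.reflection (ℝ ∙ (w - wi))ᗮ, Submodule.reflection_sub hnorm⟩
    have hcont : Continuous fun z : EuclideanSpace ℝ (Fin d) => |⟪wi, z⟫| :=
      (continuous_const.inner continuous_id).abs
    have hRZ : AEMeasurable (fun ω => R (Z ω)) μ :=
      R.continuous.measurable.comp_aemeasurable hZm
    have h1 : ∫ ω, |⟪wi, R (Z ω)⟫| ∂μ = ∫ ω, |⟪wi, Z ω⟫| ∂μ := by
      rw [← integral_map hRZ hcont.aestronglyMeasurable, hrot R,
        integral_map hZm hcont.aestronglyMeasurable]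
    have h2 : ∫ ω, |⟪wi, R (Z ω)⟫| ∂μ = 0 := by
      have hae : ∀ᵐ ω ∂μ, |⟪wi, R (Z ω)⟫| = 0 := by
        filter_upwards [h] with ω hω
        rw [← hR, LinearIsometryEquiv.inner_map_map, hω, abs_zero]
      rw [integral_congr_ae hae, integral_zero]
    have hint : Integrable (fun ω => |⟪wi, Z ω⟫|) μ := by
      refine (hZnorm.const_mul ‖wi‖).mono'
        (hcont.comp_aestronglyMeasurable hZm.aestronglyMeasurable) ?_
      filter_upwards with ω
      rw [Real.norm_eq_abs, abs_abs]
      exact abs_real_inner_le_norm _ _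
    have h4 := (integral_eq_zero_iff_of_nonneg (fun ω => abs_nonneg _) hint).1 (h1 ▸ h2)
    filter_upwards [h4] with ω hω
    have h5 : ⟪wi, Z ω⟫ = 0 := abs_eq_zero.1 hω
    rw [hwi, real_inner_smul_left, EuclideanSpace.inner_single_left] at h5
    simp only [map_one, one_mul] at h5
    exact (mul_eq_zero.1 h5).resolve_left hw0
  have hall : ∀ᵐ ω ∂μ, ∀ i, Z ω i = 0 := ae_all_iff.2 key
  obtain ⟨ω, hω1, hω2⟩ := (hall.and hne).exists
  exact hω2 (by ext i; exact hω1 i)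

include hZm hrot hmom in
lemma inner_Vf_pos [IsProbabilityMeasure μ] (hne : ∀ᵐ ω ∂μ, Z ω ≠ 0)
    (w : EuclideanSpace ℝ (Fin d)) (hw : w ≠ 0) : 0 < ⟪w, Vf μ Z w⟫ := by
  have e1 : ⟪w, Vf μ Z w⟫ = ∫ ω, Real.exp ⟪w, Z ω⟫ * ⟪w, Z ω⟫ ∂μ := by
    rw [Vf, ← integral_inner (int_smul hZm hmom w) w]
    congr 1
    funext ω
    rw [real_inner_smul_right]
  rw [e1]
  have hnot : ¬ ∀ᵐ ω ∂μ, ⟪w, Z ω⟫ = 0 := not_ae_inner_zero hZm hrot hmom hne w hw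
  have hint1 := int_mul hZm hmom w
  have hint1' := int_mul hZm hmom (-w)
  -- the sinh argument
  set f : Ω → ℝ := fun ω => (Real.exp ⟪w, Z ω⟫ - Real.exp (-⟪w, Z ω⟫)) * ⟪w, Z ω⟫ with hfdef
  have hint2 : Integrable (fun ω => Real.exp (-⟪w, Z ω⟫) * ⟪w, Z ω⟫) μ := by
    refine hint1'.neg.congr (Filter.Eventually.of_forall fun ω => ?_)
    simp only [inner_neg_left, Pi.neg_apply]
    ring
  have hcont : Continuous fun z : EuclideanSpace ℝ (Fin d) => Real.exp ⟪w, z⟫ * ⟪w, z⟫ :=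
    (Real.continuous_exp.comp (continuous_const.inner continuous_id)).mul
      (continuous_const.inner continuous_id)
  have hsym : ∫ ω, Real.exp (-⟪w, Z ω⟫) * ⟪w, Z ω⟫ ∂μ
      = - ∫ ω, Real.exp ⟪w, Z ω⟫ * ⟪w, Z ω⟫ ∂μ := by
    set R : EuclideanSpace ℝ (Fin d) ≃ₗᵢ[ℝ] EuclideanSpace ℝ (Fin d) :=
      LinearIsometryEquiv.neg ℝ with hRdef
    have hRZ : AEMeasurable (fun ω => R (Z ω)) μ :=
      R.continuous.measurable.comp_aemeasurable hZm
    have h : ∫ ω, Real.exp ⟪w, R (Z ω)⟫ * ⟪w, R (Z ω)⟫ ∂μ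
        = ∫ ω, Real.exp ⟪w, Z ω⟫ * ⟪w, Z ω⟫ ∂μ := by
      rw [← integral_map hRZ hcont.aestronglyMeasurable, hrot R,
        integral_map hZm hcont.aestronglyMeasurable]
    have hneg : ∀ z : EuclideanSpace ℝ (Fin d), R z = -z := fun z => rfl
    simp only [hneg, inner_neg_right, mul_neg] at h
    rw [integral_neg] at h
    linarith [h]
  have hf_int : Integrable f μ := by
    have := hint1.sub hint2
    simp only [hfdef, sub_mul]
    exact this
  have h2I : ∫ ω, f ω ∂μ = 2 * ∫ ω, Real.exp ⟪w, Z ω⟫ * ⟪w, Z ω⟫ ∂μ := by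
    have he : ∀ ω, f ω = Real.exp ⟪w, Z ω⟫ * ⟪w, Z ω⟫
        - Real.exp (-⟪w, Z ω⟫) * ⟪w, Z ω⟫ := fun ω => by simp [hfdef]; ring
    simp only [he]
    rw [integral_sub hint1 hint2, hsym]
    ring
  have harith : ∀ t : ℝ, t ≠ 0 → 0 < (Real.exp t - Real.exp (-t)) * t := by
    intro t ht
    rcases lt_or_gt_of_ne ht with h | h
    · have h1 : Real.exp t < Real.exp (-t) := Real.exp_lt_exp.2 (by linarith)
      exact mul_pos_of_neg_of_neg (by linarith) h
    · have h1 : Real.exp (-t) < Real.exp t := Real.exp_lt_exp.2 (by linarith)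
      exact mul_pos (by linarith) h
  have hfnn : ∀ ω, 0 ≤ f ω := by
    intro ω
    rcases eq_or_ne ⟪w, Z ω⟫ 0 with h | h
    · simp only [hfdef]
      rw [h]
      simp
    · exact (harith _ h).le
  have hfpos : 0 < ∫ ω, f ω ∂μ := by
    rw [integral_pos_iff_support_of_nonneg_ae (Filter.Eventually.of_forall hfnn) hf_int]
    rw [pos_iff_ne_zero]
    intro hμ0
    apply hnot
    have hnm := (measure_eq_zero_iff_ae_notMem).1 hμ0
    filter_upwards [hnm] with ω hω
    have hf0 : f ω = 0 := Function.notMem_support.1 hω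
    by_contra ht
    exact (harith _ ht).ne' hf0
  linarith [h2I ▸ hfpos]

include hZm hrot hmom in
lemma gam_pos [IsProbabilityMeasure μ] (hne : ∀ᵐ ω ∂μ, Z ω ≠ 0)
    (w : EuclideanSpace ℝ (Fin d)) (hw : w ≠ 0) : 0 < gam μ Z w :=
  div_pos (inner_Vf_pos hZm hrot hmom hne w hw)
    (mul_pos (pow_pos (norm_pos_iff.2 hw) 2) (N_pos hmom w))

include hZm hrot hmom in
lemma gam_congr (w w' : EuclideanSpace ℝ (Fin d)) (h : ‖w‖ = ‖w'‖) :
    gam μ Z w = gam μ Z w' := by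
  obtain ⟨R, hR⟩ : ∃ R : EuclideanSpace ℝ (Fin d) ≃ₗᵢ[ℝ] EuclideanSpace ℝ (Fin d), R w = w' :=
    ⟨Submodule.reflection (ℝ ∙ (w - w'))ᗮ, Submodule.reflection_sub h⟩
  rw [gam, gam, ← hR, N_inv hZm hrot, V_equiv hZm hrot hmom,
    LinearIsometryEquiv.inner_map_map, LinearIsometryEquiv.norm_map]

include hZm hrot hmom in
lemma V_eq [IsProbabilityMeasure μ] (w : EuclideanSpace ℝ (Fin d)) (hw : w ≠ 0) :
    Vf μ Z w = (gam μ Z w * Nf μ Z w) • w := by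
  have hRw : Submodule.reflection (ℝ ∙ w) w = w :=
    Submodule.reflection_mem_subspace_eq_self (Submodule.mem_span_singleton_self w)
  have h1 : Vf μ Z w = Submodule.reflection (ℝ ∙ w) (Vf μ Z w) := by
    conv_lhs => rw [← hRw, V_equiv hZm hrot hmom (Submodule.reflection (ℝ ∙ w)) w]
  have hmem : Vf μ Z w ∈ (ℝ ∙ w) := (Submodule.reflection_eq_self_iff _).1 h1.symm
  obtain ⟨c, hc⟩ := Submodule.mem_span_singleton.1 hmem
  have hip : ⟪w, Vf μ Z w⟫ = c * ‖w‖ ^ 2 := by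
    rw [← hc, real_inner_smul_right, real_inner_self_eq_norm_sq]
  have hw0 : ‖w‖ ≠ 0 := norm_ne_zero_iff.2 hw
  have hN0 : Nf μ Z w ≠ 0 := (N_pos hmom w).ne'
  have : gam μ Z w * Nf μ Z w = c := by
    rw [gam, hip]
    field_simp
  rw [this, hc]

end Hyps

end Stmt8Aux

open Stmt8Aux

/-- Joint-covariance limit under elliptical inputs: if `X = B Z` with `Z` rotationally
invariant (not a.s. zero) and `B` invertible, then the tilted mean
`m(p) = E[X exp⟪p,X⟫]/E[exp⟪p,X⟫]` equals `γ • Σ p` with `Σ = B Bᵀ`, where the positive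
scalar `γ` depends on `B` only through `‖Bᵀ p‖` (equivalently through `pᵀ Σ p`). -/
theorem stmt_8 {d : ℕ} {Ω : Type*} [MeasurableSpace Ω]
    (μ : Measure Ω) [IsProbabilityMeasure μ]
    (Z : Ω → EuclideanSpace ℝ (Fin d)) (hZm : AEMeasurable Z μ)
    (hrot : ∀ R : EuclideanSpace ℝ (Fin d) ≃ₗᵢ[ℝ] EuclideanSpace ℝ (Fin d),
      Measure.map (fun ω => R (Z ω)) μ = Measure.map Z μ)
    (hne : ∀ᵐ ω ∂μ, Z ω ≠ 0)
    (B : EuclideanSpace ℝ (Fin d) →L[ℝ] EuclideanSpace ℝ (Fin d))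
    (hB : Function.Bijective B)
    (hmom : ∀ u : EuclideanSpace ℝ (Fin d),
      Integrable (fun ω => Real.exp ⟪u, Z ω⟫) μ ∧
      Integrable (fun ω => ‖Z ω‖ * Real.exp ⟪u, Z ω⟫) μ) :
    ∃ γ : ℝ → ℝ, ∀ p : EuclideanSpace ℝ (Fin d), p ≠ 0 →
      ContinuousLinearMap.adjoint B p ≠ 0 →
      0 < γ ‖ContinuousLinearMap.adjoint B p‖ ∧
      (∫ ω, Real.exp ⟪p, B (Z ω)⟫ ∂μ)⁻¹ • (∫ ω, Real.exp ⟪p, B (Z ω)⟫ • B (Z ω) ∂μ) =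
        γ ‖ContinuousLinearMap.adjoint B p‖ • B (ContinuousLinearMap.adjoint B p) := by
  
  classical
  refine ⟨fun r => if h : ∃ w' : EuclideanSpace ℝ (Fin d), w' ≠ 0 ∧ ‖w'‖ = r
      then gam μ Z h.choose else 1, ?_⟩
  intro p hp hw
  set w := ContinuousLinearMap.adjoint B p with hwdef
  have hex : ∃ w' : EuclideanSpace ℝ (Fin d), w' ≠ 0 ∧ ‖w'‖ = ‖w‖ := ⟨w, hw, rfl⟩
  have hgval : (if h : ∃ w' : EuclideanSpace ℝ (Fin d), w' ≠ 0 ∧ ‖w'‖ = ‖w‖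
      then gam μ Z h.choose else 1) = gam μ Z w := by
    rw [dif_pos hex]
    exact gam_congr hZm hrot hmom _ _ hex.choose_spec.2
  simp only [hgval]
  have hinner : ∀ z, ⟪p, B z⟫ = ⟪w, z⟫ := fun z =>
    (ContinuousLinearMap.adjoint_inner_left B z p).symm
  constructor
  · exact gam_pos hZm hrot hmom hne w hw
  · simp_rw [hinner]
    have hnum : ∫ ω, Real.exp ⟪w, Z ω⟫ • B (Z ω) ∂μ = B (Vf μ Z w) := by
      simp_rw [← B.map_smul]
      exact ContinuousLinearMap.integral_comp_comm B (int_smul hZm hmom w)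
    have hden : ∫ ω, Real.exp ⟪w, Z ω⟫ ∂μ = Nf μ Z w := rfl
    rw [hnum, hden, V_eq hZm hrot hmom w hw, B.map_smul, smul_smul]
    congr 1
    have hN0 : Nf μ Z w ≠ 0 := (N_pos hmom w).ne'
    field_simp
end
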